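/- arXiv:1303.5104 — 5 statements merged into one kernel-verified Lean document; each statement's English description precedes it below -/
import Mathlib

section
/- Let (Rₙ)ₙ be a sequence of i.i.d. real-valued, nonnegative random variables such that log(Rₙ) is square-integrable, and define Yₙ₊₁ = Rₙ · Yₙ with |Y₀| ≠ 0 almost surely and Y₀ independent of the Rₙ. If E[log(R₀)] < 0 then |Yₙ| → 0 almost surely as n → ∞. -/
open MeasureTheory ProbabilityTheory Filter

theorem stmt2 {Ω : Type*} [MeasureSpace Ω] [IsProbabilityMeasure (ℙ : Measure Ω)]
    (R : ℕ → Ω → ℝ) (hmeas : ∀ n, Measurable (R n))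
    (hnn : ∀ n ω, 0 ≤ R n ω)
    (hindep : iIndepFun R ℙ)
    (hid : ∀ n, IdentDistrib (R n) (R 0) ℙ ℙ)
    (hL2 : MemLp (fun ω => Real.log (R 0 ω)) 2 ℙ)
    (Y : ℕ → Ω → ℝ)
    (hY : ∀ n ω, Y n ω = (∏ i ∈ Finset.range n, R i ω) * Y 0 ω)
    (hY0 : ∀ᵐ ω ∂ℙ, Y 0 ω ≠ 0)
    (hYindep : ∀ n, IndepFun (Y 0) (R n) ℙ)
    (hneg : ∫ ω, Real.log (R 0 ω) ∂ℙ < 0) :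
    ∀ᵐ ω ∂ℙ, Tendsto (fun n => |Y n ω|) atTop (nhds 0) := by
  set X : ℕ → Ω → ℝ := fun n ω => Real.log (R n ω) with hX
  have hXmeas : ∀ n, Measurable (X n) := fun n => Real.measurable_log.comp (hmeas n)
  have hXint : Integrable (X 0) ℙ := hL2.integrable (by norm_num)
  have hXindep : Pairwise (Function.onFun (IndepFun · · ℙ) X) := fun i j hij =>
    (hindep.indepFun hij).comp Real.measurable_log Real.measurable_log
  have hXid : ∀ n, IdentDistrib (X n) (X 0) ℙ ℙ :=
    fun n => (hid n).comp Real.measurable_log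
  have hsl := strong_law_ae_real X hXint hXindep hXid
  filter_upwards [hsl, hY0] with ω hω hω0
  have hsum : Tendsto (fun n => ∑ i ∈ Finset.range n, X i ω) atTop atBot := by
    have hμ : ∫ ω, X 0 ω ∂ℙ < 0 := hneg
    have h2 : ∀ᶠ n : ℕ in atTop, (∑ i ∈ Finset.range n, X i ω) / n ≤ (∫ ω, X 0 ω ∂ℙ) / 2 :=
      hω.eventually_le_const (show (∫ ω, X 0 ω ∂ℙ) < (∫ ω, X 0 ω ∂ℙ) / 2 by linarith)
    have hcn : Tendsto (fun n : ℕ => (∫ ω, X 0 ω ∂ℙ) / 2 * n) atTop atBot := by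
      apply Tendsto.atTop_mul_const_of_neg (by linarith : (∫ ω, X 0 ω ∂ℙ) / 2 < 0)
        tendsto_natCast_atTop_atTop |>.congr
      intro n; ring
    apply tendsto_atBot_mono' atTop _ hcn
    filter_upwards [h2, eventually_ge_atTop 1] with n hn hn1
    have hnpos : (0 : ℝ) < n := by exact_mod_cast hn1
    calc ∑ i ∈ Finset.range n, X i ω = (∑ i ∈ Finset.range n, X i ω) / n * n := by
          field_simp
      _ ≤ (∫ ω, X 0 ω ∂ℙ) / 2 * n := by
          apply mul_le_mul_of_nonneg_right hn hnpos.le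
  have hprod : Tendsto (fun n => ∏ i ∈ Finset.range n, R i ω) atTop (nhds 0) := by
    have hle : ∀ n, ∏ i ∈ Finset.range n, R i ω ≤ Real.exp (∑ i ∈ Finset.range n, X i ω) := by
      intro n
      rw [Real.exp_sum]
      apply Finset.prod_le_prod (fun i _ => hnn i ω)
      intro i _
      rcases eq_or_lt_of_le (hnn i ω) with h | h
      · simp [← h, Real.exp_nonneg]
      · rw [Real.exp_log h]
    have hge : ∀ n, 0 ≤ ∏ i ∈ Finset.range n, R i ω :=
      fun n => Finset.prod_nonneg (fun i _ => hnn i ω)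
    have hexp : Tendsto (fun n => Real.exp (∑ i ∈ Finset.range n, X i ω)) atTop (nhds 0) :=
      Real.tendsto_exp_atBot.comp hsum
    exact squeeze_zero hge hle hexp
  have : Tendsto (fun n => |Y n ω|) atTop (nhds (0 * |Y 0 ω|)) := by
    have : (fun n => |Y n ω|) = fun n => |∏ i ∈ Finset.range n, R i ω| * |Y 0 ω| := by
      funext n; rw [hY n ω, abs_mul]
    rw [this]
    have h := hprod.abs
    rw [abs_zero] at h
    exact h.mul_const _
  simpa using this
end

section
/- Let R be a random variable of the form R = Γ + Σ·ξ where Γ, Σ ∈ ℂ and ξ satisfies P(ξ = √3) = P(ξ = -√3) = 1/6 and P(ξ = 0) = 2/3. Then E[log|R|] = (1/6)·log(|Γ² - 3Σ²|·|Γ|⁴). In particular E[log|R|] < 0 if and only if |Γ² - 3Σ²|·|Γ|⁴ < 1. -/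
open MeasureTheory ProbabilityTheory

theorem stmt5 {Ω : Type*} [MeasureSpace Ω] [IsProbabilityMeasure (ℙ : Measure Ω)]
    (ξ : Ω → ℝ) (hmeas : Measurable ξ)
    (h1 : ℙ {ω | ξ ω = Real.sqrt 3} = 1 / 6)
    (h2 : ℙ {ω | ξ ω = -Real.sqrt 3} = 1 / 6)
    (h3 : ℙ {ω | ξ ω = 0} = 2 / 3)
    (G S : ℂ) (hG : G ≠ 0)
    (hp : G + (Real.sqrt 3 : ℂ) * S ≠ 0) (hm : G - (Real.sqrt 3 : ℂ) * S ≠ 0) :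
    ∫ ω, Real.log (‖G + S * (ξ ω : ℂ)‖) ∂ℙ =
      (1 / 6) * Real.log (‖G ^ 2 - 3 * S ^ 2‖ * ‖G‖ ^ 4) ∧
    (∫ ω, Real.log (‖G + S * (ξ ω : ℂ)‖) ∂ℙ < 0 ↔
      ‖G ^ 2 - 3 * S ^ 2‖ * ‖G‖ ^ 4 < 1) := by
  set a : ℝ := Real.sqrt 3 with ha_def
  have ha_pos : 0 < a := Real.sqrt_pos.mpr (by norm_num)
  have ha_sq : (a : ℂ) ^ 2 = 3 := by
    have h : a ^ 2 = 3 := Real.sq_sqrt (by norm_num)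
    exact_mod_cast h
  set c1 : ℝ := Real.log (‖G + (a : ℂ) * S‖) with hc1
  set c2 : ℝ := Real.log (‖G - (a : ℂ) * S‖) with hc2
  set c3 : ℝ := Real.log (‖G‖) with hc3
  set A : Set Ω := {ω | ξ ω = a}
  set B : Set Ω := {ω | ξ ω = -a}
  set C : Set Ω := {ω | ξ ω = 0}
  have hAm : MeasurableSet A := hmeas (measurableSet_singleton a)
  have hBm : MeasurableSet B := hmeas (measurableSet_singleton (-a))
  have hCm : MeasurableSet C := hmeas (measurableSet_singleton 0)
  set g : Ω → ℝ := fun ω =>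
    A.indicator (fun _ => c1) ω + B.indicator (fun _ => c2) ω + C.indicator (fun _ => c3) ω
    with hg_def
  -- the union has full measure
  have hdisjAB : Disjoint A B := by
    rw [Set.disjoint_left]
    intro ω hA hB
    have : a = -a := hA.symm.trans hB
    linarith
  have hdisjAC : Disjoint A C := by
    rw [Set.disjoint_left]
    intro ω hA hC
    have : a = 0 := hA.symm.trans hC
    linarith
  have hdisjBC : Disjoint B C := by
    rw [Set.disjoint_left]
    intro ω hB hC
    have : -a = 0 := hB.symm.trans hC
    linarith
  have hunion : ℙ (A ∪ B ∪ C) = 1 := by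
    rw [measure_union (hdisjAC.union_left hdisjBC) hCm,
      measure_union hdisjAB hBm, h1, h2, h3]
    rw [ENNReal.div_add_div_same,
      show ((2:ENNReal)/3) = 4/6 by rw [ENNReal.div_eq_div_iff] <;> norm_num,
      ENNReal.div_add_div_same, ENNReal.div_eq_one_iff] <;> norm_num
  have hcompl : ℙ (A ∪ B ∪ C)ᶜ = 0 := by
    rw [measure_compl ((hAm.union hBm).union hCm) (measure_ne_top _ _), hunion,
      measure_univ, tsub_self]
  -- a.e. equality with the simple function g
  have hae : (fun ω => Real.log (‖G + S * (ξ ω : ℂ)‖)) =ᵐ[ℙ] g := by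
    have hmemae : (A ∪ B ∪ C) ∈ MeasureTheory.ae ℙ := by
      rw [MeasureTheory.mem_ae_iff]
      exact hcompl
    refine Filter.eventuallyEq_of_mem hmemae ?_
    intro ω hω
    rcases hω with (hA | hB) | hC
    · have hξ : ξ ω = a := hA
      have hB' : ω ∉ B := Set.disjoint_left.mp hdisjAB hA
      have hC' : ω ∉ C := Set.disjoint_left.mp hdisjAC hA
      simp only [hg_def, Set.indicator_of_mem hA, Set.indicator_of_notMem hB',
          Set.indicator_of_notMem hC', add_zero]
      rw [hξ, hc1, mul_comm]
    · have hξ : ξ ω = -a := hB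
      have hA' : ω ∉ A := Set.disjoint_right.mp hdisjAB hB
      have hC' : ω ∉ C := Set.disjoint_left.mp hdisjBC hB
      simp only [hg_def, Set.indicator_of_mem hB, Set.indicator_of_notMem hA',
          Set.indicator_of_notMem hC', add_zero, zero_add]
      rw [hξ, hc2]
      push_cast
      ring_nf
    · have hξ : ξ ω = 0 := hC
      have hA' : ω ∉ A := Set.disjoint_right.mp hdisjAC hC
      have hB' : ω ∉ B := Set.disjoint_right.mp hdisjBC hC
      simp only [hg_def, Set.indicator_of_mem hC, Set.indicator_of_notMem hA',
          Set.indicator_of_notMem hB', zero_add]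
      rw [hξ, hc3]
      norm_num
  -- compute the integral
  have hint : ∫ ω, Real.log (‖G + S * (ξ ω : ℂ)‖) ∂ℙ
      = (1/6 : ℝ) * c1 + (1/6 : ℝ) * c2 + (2/3 : ℝ) * c3 := by
    rw [integral_congr_ae hae]
    have i1 : Integrable (A.indicator (fun _ => c1)) ℙ :=
      (integrable_const c1).indicator hAm
    have i2 : Integrable (B.indicator (fun _ => c2)) ℙ :=
      (integrable_const c2).indicator hBm
    have i3 : Integrable (C.indicator (fun _ => c3)) ℙ :=
      (integrable_const c3).indicator hCm
    have e := integral_add (μ := ℙ) (i1.add i2) i3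
    simp only [Pi.add_apply] at e
    rw [integral_add i1 i2] at e
    rw [hg_def, e,
      integral_indicator_const _ hAm, integral_indicator_const _ hBm,
      integral_indicator_const _ hCm, measureReal_def, measureReal_def, measureReal_def,
      h1, h2, h3]
    rw [ENNReal.toReal_div, ENNReal.toReal_div]
    norm_num
  -- algebraic identity for the RHS
  have hfact : G ^ 2 - 3 * S ^ 2 = (G + (a : ℂ) * S) * (G - (a : ℂ) * S) := by
    ring_nf
    rw [ha_sq]
  have habs_p : ‖G + (a : ℂ) * S‖ ≠ 0 := norm_ne_zero_iff.mpr hp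
  have habs_m : ‖G - (a : ℂ) * S‖ ≠ 0 := norm_ne_zero_iff.mpr hm
  have habs_G : ‖G‖ ≠ 0 := norm_ne_zero_iff.mpr hG
  have hRHS : (1 / 6 : ℝ) * Real.log (‖G ^ 2 - 3 * S ^ 2‖ * ‖G‖ ^ 4)
      = (1/6 : ℝ) * c1 + (1/6 : ℝ) * c2 + (2/3 : ℝ) * c3 := by
    rw [hfact, norm_mul]
    rw [Real.log_mul (mul_ne_zero habs_p habs_m) (pow_ne_zero 4 habs_G),
      Real.log_mul habs_p habs_m, Real.log_pow]
    push_cast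
    ring
  constructor
  · rw [hint, hRHS]
  · rw [hint, ← hRHS]
    have hx_pos : 0 < ‖G ^ 2 - 3 * S ^ 2‖ * ‖G‖ ^ 4 := by
      rw [hfact, norm_mul]
      positivity
    constructor
    · intro h
      by_contra hle
      push_neg at hle
      have := Real.log_nonneg hle
      nlinarith
    · intro h
      have := Real.log_neg hx_pos h
      nlinarith
end

section
/- Let ξ satisfy P(ξ = ±√3) = 1/6, P(ξ = 0) = 2/3, and let R = (Γ - Λ) + Σ·ξ + Λ·ξ², with Γ, Σ, Λ ∈ ℂ. Then E[|R|²] = |Γ|² + |Σ|² + 2|Λ|². -/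
open MeasureTheory ProbabilityTheory
open scoped ENNReal

theorem stmt7 {Ω : Type*} [MeasureSpace Ω] [IsProbabilityMeasure (ℙ : Measure Ω)]
    (ξ : Ω → ℝ) (hmeas : Measurable ξ)
    (h1 : ℙ {ω | ξ ω = Real.sqrt 3} = 1 / 6)
    (h2 : ℙ {ω | ξ ω = -Real.sqrt 3} = 1 / 6)
    (h3 : ℙ {ω | ξ ω = 0} = 2 / 3)
    (G S L : ℂ) :
    ∫ ω, ‖(G - L) + S * (ξ ω : ℂ) + L * (ξ ω : ℂ) ^ 2‖ ^ 2 ∂ℙ =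
      ‖G‖ ^ 2 + ‖S‖ ^ 2 + 2 * ‖L‖ ^ 2 := by
  set s := Real.sqrt 3 with hsdef
  have hs3 : s ^ 2 = 3 := Real.sq_sqrt (by norm_num)
  have hs0 : s ≠ 0 := by
    intro h; rw [h] at hs3; norm_num at hs3
  set A : Set Ω := {ω | ξ ω = s} with hA
  set B : Set Ω := {ω | ξ ω = -s} with hB
  set C : Set Ω := {ω | ξ ω = 0} with hC
  have hAm : MeasurableSet A := hmeas (measurableSet_singleton s)
  have hBm : MeasurableSet B := hmeas (measurableSet_singleton (-s))
  have hCm : MeasurableSet C := hmeas (measurableSet_singleton 0)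
  set c1 : ℝ := ‖(G - L) + S * (s:ℂ) + L * (s:ℂ)^2‖ ^ 2 with hc1
  set c2 : ℝ := ‖(G - L) + S * ((-s:ℝ):ℂ) + L * ((-s:ℝ):ℂ)^2‖ ^ 2 with hc2
  set c3 : ℝ := ‖(G - L) + S * ((0:ℝ):ℂ) + L * ((0:ℝ):ℂ)^2‖ ^ 2 with hc3
  have hsns : s ≠ -s := fun h => hs0 (by linarith [h])
  have hnull : ℙ (A ∪ B ∪ C)ᶜ = 0 := by
    have hdisjAB : Disjoint A B := by
      rw [Set.disjoint_left]
      intro ω hωA hωB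
      exact hsns ((hωA).symm.trans hωB)
    have hdisjC : Disjoint (A ∪ B) C := by
      rw [Set.disjoint_left]
      rintro ω (hω | hω) hωC
      · exact hs0 ((hω).symm.trans hωC)
      · exact hs0 (by have h' : -s = 0 := (hω).symm.trans hωC; linarith)
    have hu : ℙ (A ∪ B ∪ C) = 1 := by
      rw [measure_union hdisjC hCm, measure_union hdisjAB hBm, h1, h2, h3]
      have h23 : (2:ℝ≥0∞)/3 = 4/6 := by
        rw [ENNReal.div_eq_div_iff] <;> norm_num
      rw [ENNReal.div_add_div_same, h23, ENNReal.div_add_div_same]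
      norm_num
      rw [ENNReal.div_self] <;> norm_num
    rw [measure_compl ((hAm.union hBm).union hCm) (measure_ne_top _ _), hu]
    simp
  have hcongr : (fun ω => ‖(G - L) + S * (ξ ω : ℂ) + L * (ξ ω : ℂ) ^ 2‖ ^ 2)
      =ᵐ[ℙ] fun ω => A.indicator (fun _ => c1) ω + B.indicator (fun _ => c2) ω
        + C.indicator (fun _ => c3) ω := by
    refine Filter.eventuallyEq_of_mem (mem_ae_iff.mpr hnull) ?_
    rintro ω ((hω | hω) | hω)
    · have hξ : ξ ω = s := hω
      have nB : ω ∉ B := fun h => hsns (hξ.symm.trans h)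
      have nC : ω ∉ C := fun h => hs0 (hξ.symm.trans h)
      simp [Set.indicator_of_mem hω, Set.indicator_of_notMem nB,
        Set.indicator_of_notMem nC, hc1, hξ]
    · have hξ : ξ ω = -s := hω
      have nA : ω ∉ A := fun h => hsns ((hξ.symm.trans h).symm)
      have nC : ω ∉ C := fun h => hs0 (by have : -s = 0 := hξ.symm.trans h; linarith)
      simp [Set.indicator_of_mem hω, Set.indicator_of_notMem nA,
        Set.indicator_of_notMem nC, hc2, hξ]
    · have hξ : ξ ω = 0 := hω
      have nA : ω ∉ A := fun h => hs0 ((hξ.symm.trans h).symm)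
      have nB : ω ∉ B := fun h => hs0 (by have : (0:ℝ) = -s := hξ.symm.trans h; linarith)
      simp [Set.indicator_of_mem hω, Set.indicator_of_notMem nA,
        Set.indicator_of_notMem nB, hc3, hξ]
  have i1 : Integrable (fun a => A.indicator (fun _ => c1) a) ℙ :=
    (integrable_const c1).indicator hAm
  have i2 : Integrable (fun a => B.indicator (fun _ => c2) a) ℙ :=
    (integrable_const c2).indicator hBm
  have i3 : Integrable (fun a => C.indicator (fun _ => c3) a) ℙ :=
    (integrable_const c3).indicator hCm
  have i12 : Integrable (fun a => A.indicator (fun _ => c1) a + B.indicator (fun _ => c2) a) ℙ :=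
    i1.add i2
  rw [integral_congr_ae hcongr, integral_add i12 i3, integral_add i1 i2,
    integral_indicator_const _ hAm, integral_indicator_const _ hBm,
    integral_indicator_const _ hCm, measureReal_def, measureReal_def, measureReal_def, h1, h2, h3]
  have t1 : ((1:ℝ≥0∞)/6).toReal = 1/6 := by norm_num
  have t2 : ((2:ℝ≥0∞)/3).toReal = 2/3 := by norm_num
  rw [t1, t2]
  have e1 : ((s:ℝ):ℂ)^2 = (3:ℂ) := by norm_cast
  have e2 : ((-s:ℝ):ℂ)^2 = (3:ℂ) := by push_cast; rw [neg_pow]; norm_cast; simp [hs3]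
  simp only [hc1, hc2, hc3, e1, e2, smul_eq_mul]
  simp only [Complex.sq_norm, Complex.normSq_apply, Complex.add_re, Complex.add_im,
    Complex.sub_re, Complex.sub_im, Complex.mul_re, Complex.mul_im, Complex.ofReal_re,
    Complex.ofReal_im, Complex.ofReal_neg, Complex.neg_re, Complex.neg_im,
    Complex.ofReal_zero]
  norm_num
  linear_combination ((S.re^2 + S.im^2)/3) * hs3
end

section
/- Let ξ satisfy P(ξ = ±√3) = 1/6, P(ξ = 0) = 2/3, and let R = (Γ - Λ) + Σ·ξ + Λ·ξ² with Γ, Σ, Λ ∈ ℂ. Then E[log|R|] = (1/6)·log(|(Γ + 2Λ)² - 3Σ²|·|Γ - Λ|⁴). In particular E[log|R|] < 0 if and only if |(Γ + 2Λ)² - 3Σ²|·|Γ - Λ|⁴ < 1. -/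
open MeasureTheory ProbabilityTheory

theorem stmt8 {Ω : Type*} [MeasureSpace Ω] [IsProbabilityMeasure (ℙ : Measure Ω)]
    (ξ : Ω → ℝ) (hmeas : Measurable ξ)
    (h1 : ℙ {ω | ξ ω = Real.sqrt 3} = 1 / 6)
    (h2 : ℙ {ω | ξ ω = -Real.sqrt 3} = 1 / 6)
    (h3 : ℙ {ω | ξ ω = 0} = 2 / 3)
    (G S L : ℂ) (hGL : G - L ≠ 0)
    (hp : G + 2 * L + (Real.sqrt 3 : ℂ) * S ≠ 0)
    (hm : G + 2 * L - (Real.sqrt 3 : ℂ) * S ≠ 0) :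
    ∫ ω, Real.log (‖(G - L) + S * (ξ ω : ℂ) + L * (ξ ω : ℂ) ^ 2‖) ∂ℙ =
      (1 / 6) * Real.log (‖(G + 2 * L) ^ 2 - 3 * S ^ 2‖ *
        ‖G - L‖ ^ 4) ∧
    (∫ ω, Real.log (‖(G - L) + S * (ξ ω : ℂ) + L * (ξ ω : ℂ) ^ 2‖) ∂ℙ < 0 ↔
      ‖(G + 2 * L) ^ 2 - 3 * S ^ 2‖ * ‖G - L‖ ^ 4 < 1) := by
  have s3pos : (0:ℝ) < Real.sqrt 3 := Real.sqrt_pos.2 (by norm_num)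
  have hc3 : ((Real.sqrt 3 : ℝ) : ℂ) ^ 2 = 3 := by
    norm_cast
    rw [Real.sq_sqrt] <;> norm_num
  have hfac : (G + 2 * L) ^ 2 - 3 * S ^ 2 =
      (G + 2 * L + (Real.sqrt 3 : ℂ) * S) * (G + 2 * L - (Real.sqrt 3 : ℂ) * S) := by
    linear_combination S ^ 2 * hc3
  set A := {ω | ξ ω = Real.sqrt 3} with hAdef
  set B := {ω | ξ ω = -Real.sqrt 3} with hBdef
  set C := {ω | ξ ω = 0} with hCdef
  have hA : MeasurableSet A := hmeas (measurableSet_singleton _)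
  have hB : MeasurableSet B := hmeas (measurableSet_singleton _)
  have hC : MeasurableSet C := hmeas (measurableSet_singleton _)
  set a := Real.log (‖G + 2 * L + (Real.sqrt 3 : ℂ) * S‖) with hadef
  set b := Real.log (‖G + 2 * L - (Real.sqrt 3 : ℂ) * S‖) with hbdef
  set c := Real.log (‖G - L‖) with hcdef
  set F : Ω → ℝ := fun ω => A.indicator (fun _ => a) ω + B.indicator (fun _ => b) ω
      + C.indicator (fun _ => c) ω with hFdef
  have hdisjAB : Disjoint A B := by
    rw [Set.disjoint_left]
    intro ω hωA hωB
    simp only [hAdef, hBdef, Set.mem_setOf_eq] at hωA hωB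
    rw [hωA] at hωB; linarith
  have hdisjAC : Disjoint A C := by
    rw [Set.disjoint_left]
    intro ω hωA hωC
    simp only [hAdef, hCdef, Set.mem_setOf_eq] at hωA hωC
    rw [hωA] at hωC; linarith
  have hdisjBC : Disjoint B C := by
    rw [Set.disjoint_left]
    intro ω hωB hωC
    simp only [hBdef, hCdef, Set.mem_setOf_eq] at hωB hωC
    rw [hωB] at hωC; linarith
  have hunion : ℙ (A ∪ B ∪ C) = 1 := by
    rw [measure_union (hdisjAC.union_left hdisjBC) hC,
        measure_union hdisjAB hB, h1, h2, h3]
    rw [ENNReal.div_add_div_same,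
      show ((2:ENNReal))/3 = 4/6 from by rw [ENNReal.div_eq_div_iff] <;> norm_num,
      show ((1:ENNReal))+1 = 2 from by norm_num, ENNReal.div_add_div_same]
    norm_num
    rw [ENNReal.div_self] <;> norm_num
  have hnull : ℙ (A ∪ B ∪ C)ᶜ = 0 := by
    rw [measure_compl ((hA.union hB).union hC) (measure_ne_top _ _), hunion]
    simp
  have hae : (fun ω => Real.log (‖(G - L) + S * (ξ ω : ℂ) + L * (ξ ω : ℂ) ^ 2‖))
      =ᵐ[ℙ] F := by
    rw [Filter.EventuallyEq, ae_iff]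
    refine measure_mono_null (fun ω hω => ?_) hnull
    simp only [Set.mem_setOf_eq] at hω
    simp only [Set.mem_compl_iff, Set.mem_union, not_or]
    refine ⟨⟨fun hωA => hω ?_, fun hωB => hω ?_⟩, fun hωC => hω ?_⟩
    · have hnB : ω ∉ B := Set.disjoint_left.1 hdisjAB hωA
      have hnC : ω ∉ C := Set.disjoint_left.1 hdisjAC hωA
      have hξ : ξ ω = Real.sqrt 3 := hωA
      simp only [hFdef, Set.indicator_of_mem hωA, Set.indicator_of_notMem hnB,
        Set.indicator_of_notMem hnC, add_zero, hadef]
      congr 2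
      rw [hξ]
      linear_combination L * hc3
    · have hnA : ω ∉ A := Set.disjoint_right.1 hdisjAB hωB
      have hnC : ω ∉ C := Set.disjoint_left.1 hdisjBC hωB
      have hξ : ξ ω = -Real.sqrt 3 := hωB
      simp only [hFdef, Set.indicator_of_mem hωB, Set.indicator_of_notMem hnA,
        Set.indicator_of_notMem hnC, add_zero, zero_add, hbdef]
      congr 2
      rw [hξ]
      push_cast
      linear_combination L * hc3
    · have hnA : ω ∉ A := Set.disjoint_right.1 hdisjAC hωC
      have hnB : ω ∉ B := Set.disjoint_right.1 hdisjBC hωC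
      have hξ : ξ ω = 0 := hωC
      simp only [hFdef, Set.indicator_of_mem hωC, Set.indicator_of_notMem hnA,
        Set.indicator_of_notMem hnB, zero_add, hcdef]
      congr 2
      rw [hξ]
      push_cast
      ring
  have iA : Integrable (A.indicator (fun _ => a)) ℙ := (integrable_const a).indicator hA
  have iB : Integrable (B.indicator (fun _ => b)) ℙ := (integrable_const b).indicator hB
  have iC : Integrable (C.indicator (fun _ => c)) ℙ := (integrable_const c).indicator hC
  have hint : ∫ ω, F ω ∂ℙ = a / 6 + b / 6 + (2 / 3) * c := by
    have e1 : ∫ ω, F ω ∂ℙ = (∫ ω, (A.indicator (fun _ => a) ω + B.indicator (fun _ => b) ω) ∂ℙ)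
        + ∫ ω, C.indicator (fun _ => c) ω ∂ℙ := integral_add (iA.add iB) iC
    have e2 : ∫ ω, (A.indicator (fun _ => a) ω + B.indicator (fun _ => b) ω) ∂ℙ
        = (∫ ω, A.indicator (fun _ => a) ω ∂ℙ) + ∫ ω, B.indicator (fun _ => b) ω ∂ℙ :=
      integral_add iA iB
    rw [e1, e2, integral_indicator_const a hA, integral_indicator_const b hB,
      integral_indicator_const c hC, measureReal_def, measureReal_def, measureReal_def, h1, h2, h3]
    simp only [smul_eq_mul, ENNReal.toReal_div]
    norm_num
    ring
  have hIeq : ∫ ω, Real.log (‖(G - L) + S * (ξ ω : ℂ) + L * (ξ ω : ℂ) ^ 2‖) ∂ℙ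
      = a / 6 + b / 6 + (2 / 3) * c := by
    rw [integral_congr_ae hae]; exact hint
  have hpa : ‖G + 2 * L + (Real.sqrt 3 : ℂ) * S‖ ≠ 0 := norm_ne_zero_iff.mpr hp
  have hma : ‖G + 2 * L - (Real.sqrt 3 : ℂ) * S‖ ≠ 0 := norm_ne_zero_iff.mpr hm
  have hga : ‖G - L‖ ≠ 0 := norm_ne_zero_iff.mpr hGL
  have hRHS : (1 / 6 : ℝ) * Real.log (‖(G + 2 * L) ^ 2 - 3 * S ^ 2‖ *
      ‖G - L‖ ^ 4) = a / 6 + b / 6 + (2 / 3) * c := by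
    rw [hfac, norm_mul, Real.log_mul (mul_ne_zero hpa hma) (pow_ne_zero 4 hga),
        Real.log_mul hpa hma, Real.log_pow, ← hadef, ← hbdef, ← hcdef]
    push_cast
    ring
  have hmain : ∫ ω, Real.log (‖(G - L) + S * (ξ ω : ℂ) + L * (ξ ω : ℂ) ^ 2‖) ∂ℙ
      = (1 / 6 : ℝ) * Real.log (‖(G + 2 * L) ^ 2 - 3 * S ^ 2‖ *
        ‖G - L‖ ^ 4) := by rw [hIeq, hRHS]
  refine ⟨hmain, ?_⟩
  rw [hmain]
  have hXpos : 0 < ‖(G + 2 * L) ^ 2 - 3 * S ^ 2‖ * ‖G - L‖ ^ 4 := by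
    rw [hfac, norm_mul]
    exact mul_pos (mul_pos (norm_pos_iff.mpr hp) (norm_pos_iff.mpr hm))
      (pow_pos (norm_pos_iff.mpr hGL) 4)
  constructor
  · intro h
    exact (Real.log_neg_iff hXpos).1 (by linarith)
  · intro h
    have := (Real.log_lt_log_iff hXpos (by norm_num : (0:ℝ) < 1)).2 h
    simp only [Real.log_one] at this
    linarith
end

section
/- The stochastic theta method with θ = 1/2 is A-stable with respect to mean-square stability: whenever λ, μ ∈ ℂ satisfy 2·Re(λ) + |μ|² < 0 and h > 0 (with λh ≠ 2), the MS-stability function satisfies |Γ|² + |Σ|² < 1 where Γ = (1 + λh/2)/(1 - λh/2) and Σ = μ√h/(1 - λh/2). -/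
theorem stmt10 (l m : ℂ) (h : ℝ) (hh : 0 < h) (hne : l * (h : ℂ) ≠ 2)
    (hstab : 2 * l.re + ‖m‖ ^ 2 < 0) :
    ‖(1 + l * h / 2) / (1 - l * h / 2)‖ ^ 2 +
      ‖m * Real.sqrt h / (1 - l * h / 2)‖ ^ 2 < 1 := by
  have hd : (1 - l * h / 2 : ℂ) ≠ 0 := by
    intro hz
    apply hne
    have : l * (h : ℂ) / 2 = 1 := by linear_combination -hz
    linear_combination 2 * this
  simp only [norm_div, div_pow]
  rw [← add_div, div_lt_one (pow_pos (norm_pos_iff.mpr hd) 2)]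
  have hsq : (Real.sqrt h) ^ 2 = h := Real.sq_sqrt hh.le
  have h1 : ‖m * (Real.sqrt h : ℂ)‖ ^ 2 = ‖m‖ ^ 2 * h := by
    rw [norm_mul, mul_pow, Complex.norm_real, Real.norm_eq_abs, sq_abs, hsq]
  rw [h1]
  have e1 : ‖1 + l * h / 2‖ ^ 2 = 1 + l.re * h + (l.re^2 + l.im^2) * h^2 / 4 := by
    rw [← Complex.normSq_eq_norm_sq, Complex.normSq_apply]
    simp [Complex.add_re, Complex.add_im, Complex.div_re, Complex.div_im,
      Complex.mul_re, Complex.mul_im, Complex.ofReal_re, Complex.ofReal_im,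
      Complex.normSq_apply]
    ring
  have e2 : ‖1 - l * h / 2‖ ^ 2 = 1 - l.re * h + (l.re^2 + l.im^2) * h^2 / 4 := by
    rw [← Complex.normSq_eq_norm_sq, Complex.normSq_apply]
    simp [Complex.sub_re, Complex.sub_im, Complex.div_re, Complex.div_im,
      Complex.mul_re, Complex.mul_im, Complex.ofReal_re, Complex.ofReal_im,
      Complex.normSq_apply]
    ring
  rw [e1, e2]
  nlinarith [sq_nonneg ‖m‖]
end
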